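/- For vertices a, b of the path P_n, the equality |sin(aπj/(n+1))| = |sin(bπj/(n+1))| holds for all j = 1,…,n if and only if a + b = n + 1 or a = b. -/

import Mathlib

open Real

theorem path_strongly_cospectral_iff (n a b : ℕ) (ha1 : 1 ≤ a) (han : a ≤ n)
    (hb1 : 1 ≤ b) (hbn : b ≤ n) :
    (∀ j : ℕ, 1 ≤ j → j ≤ n →
      |Real.sin (a * Real.pi * j / (n + 1))| = |Real.sin (b * Real.pi * j / (n + 1))|) ↔
    (a + b = n + 1 ∨ a = b) := by
  have hN : (0:ℝ) < (n:ℝ) + 1 := by positivity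
  constructor
  · intro h
    have h1 := h 1 le_rfl (le_trans ha1 han)
    push_cast at h1
    set x : ℝ := a * π * 1 / (n + 1) with hx
    set y : ℝ := b * π * 1 / (n + 1) with hy
    have hx0 : 0 < x := by
      have : (0:ℝ) < (a:ℝ) := by exact_mod_cast ha1
      rw [hx]; positivity
    have hy0 : 0 < y := by
      have : (0:ℝ) < (b:ℝ) := by exact_mod_cast hb1
      rw [hy]; positivity
    have hxπ : x < π := by
      rw [hx, div_lt_iff₀ hN]
      have : (a:ℝ) < (n:ℝ) + 1 := by exact_mod_cast Nat.lt_succ_of_le han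
      nlinarith [pi_pos]
    have hyπ : y < π := by
      rw [hy, div_lt_iff₀ hN]
      have : (b:ℝ) < (n:ℝ) + 1 := by exact_mod_cast Nat.lt_succ_of_le hbn
      nlinarith [pi_pos]
    have hsx : 0 < Real.sin x := Real.sin_pos_of_pos_of_lt_pi hx0 hxπ
    have hsy : 0 < Real.sin y := Real.sin_pos_of_pos_of_lt_pi hy0 hyπ
    have heq : Real.sin x = Real.sin y := by
      rwa [abs_of_pos hsx, abs_of_pos hsy] at h1
    have hzero : 2 * Real.sin ((x - y)/2) * Real.cos ((x + y)/2) = 0 := by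
      rw [← Real.sin_sub_sin, heq, sub_self]
    rcases mul_eq_zero.1 hzero with hz | hz
    · rcases mul_eq_zero.1 hz with hz | hz
      · norm_num at hz
      · right
        have h2 : x - y = 0 := by
          have := (Real.sin_eq_zero_iff_of_lt_of_lt (by linarith) (by linarith)).1 hz
          linarith
        have : (a:ℝ) = (b:ℝ) := by
          rw [hx, hy] at h2
          field_simp at h2
          exact mul_right_cancel₀ Real.pi_ne_zero (by linarith : (a:ℝ)*π = (b:ℝ)*π)
        exact_mod_cast this
    · left
      obtain ⟨k, hk⟩ := Real.cos_eq_zero_iff.1 hz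
      have hk0 : k = 0 := by
        have hπ := Real.pi_pos
        by_contra hk0
        rcases lt_or_gt_of_ne hk0 with hlt | hgt
        · have : (k:ℝ) ≤ -1 := by exact_mod_cast Int.le_sub_one_of_lt hlt
          nlinarith
        · have : (1:ℝ) ≤ (k:ℝ) := by exact_mod_cast hgt
          nlinarith
      rw [hk0] at hk
      have hxy : x + y = π := by push_cast at hk; linarith
      rw [hx, hy] at hxy
      have : ((a:ℝ) + b) * π = ((n:ℝ) + 1) * π := by
        field_simp at hxy
        rw [hxy]
      have h3 : (a:ℝ) + b = (n:ℝ) + 1 :=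
        mul_right_cancel₀ Real.pi_ne_zero this
      exact_mod_cast h3
  · rintro (hab | rfl) j hj1 hjn
    · have haR : (a:ℝ) = (n:ℝ) + 1 - b := by
        have : (a:ℝ) + b = (n:ℝ) + 1 := by exact_mod_cast hab
        linarith
      have harg : (a:ℝ) * π * j / (n + 1) = j * π - (b:ℝ) * π * j / (n + 1) := by
        rw [haR]
        field_simp
      rw [harg, Real.sin_nat_mul_pi_sub, abs_neg, abs_mul, abs_pow, abs_neg,
        abs_one, one_pow, one_mul]
    · rfl
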